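/- arXiv:2503.09448 — 2 statements merged into one kernel-verified Lean document; each statement's English description precedes it below -/
import Mathlib

section
/- For any probability density f on [0, π] (a nonnegative measurable function with ∫₀^π f = 1), and 0 < ε < π/2, the integral ∫₀^π f(e) · Pr(e) de is at least ε/π, where Pr(e) = 1 for e ≤ ε or e ≥ π − ε and Pr(e) = min(ε/(π sin e), 1) otherwise. In particular no distribution of prediction errors can achieve viewpoint leakage probability below ε/π. -/
open Real MeasureTheory

/-- Conditional viewpoint-leakage probability of the paper. -/
noncomputable def condLeak (ε e : ℝ) : ℝ :=
  if ε < e ∧ e < π - ε then min (ε / (π * Real.sin e)) 1 else 1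

lemma condLeak_le_one (ε e : ℝ) : condLeak ε e ≤ 1 := by
  unfold condLeak; split
  · exact min_le_right _ _
  · exact le_rfl

lemma condLeak_bounds (ε : ℝ) (hε0 : 0 < ε) (hε : ε < π / 2) (e : ℝ) :
    ε / π ≤ condLeak ε e ∧ condLeak ε e ≤ 1 := by
  have hπ : (0:ℝ) < π := Real.pi_pos
  have hεπ : ε / π ≤ 1 := by
    rw [div_le_one hπ]; linarith
  unfold condLeak; split
  · rename_i h
    obtain ⟨h1, h2⟩ := h
    have hsinpos : 0 < Real.sin e := by
      apply Real.sin_pos_of_pos_of_lt_pi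
      · linarith
      · linarith
    have hsin1 : Real.sin e ≤ 1 := Real.sin_le_one e
    constructor
    · apply le_min _ hεπ
      apply div_le_div_of_nonneg_left hε0.le (by positivity)
      calc π * Real.sin e ≤ π * 1 := by nlinarith
        _ = π := mul_one π
    · exact min_le_right _ _
  · exact ⟨hεπ, le_refl 1⟩

/-- For any probability density `f` on `[0, π]` and `0 < ε < π/2`, the viewpoint leakage
probability `∫₀^π f(e) Pr(e) de` is at least `ε/π`. -/
theorem leakage_prob_ge (ε : ℝ) (hε0 : 0 < ε) (hε : ε < π / 2)
    (f : ℝ → ℝ) (hf_meas : Measurable f) (hf_nonneg : ∀ e ∈ Set.Icc (0 : ℝ) π, 0 ≤ f e)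
    (hf_int : IntervalIntegrable f volume 0 π)
    (hf_one : ∫ e in (0 : ℝ)..π, f e = 1) :
    ε / π ≤ ∫ e in (0 : ℝ)..π, f e * condLeak ε e := by
  have hπ : (0:ℝ) < π := Real.pi_pos
  have hmeasL : Measurable (condLeak ε) := by
    unfold condLeak
    apply Measurable.ite
    · exact measurableSet_Ioo
    · exact ((measurable_const.div (measurable_const.mul Real.measurable_sin))).min measurable_const
    · exact measurable_const
  have hint : IntervalIntegrable (fun e => f e * condLeak ε e) volume 0 π := by
    apply hf_int.mono_fun ((hf_meas.mul hmeasL).aestronglyMeasurable)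
    filter_upwards with x
    simp only [Real.norm_eq_abs, Pi.mul_apply, abs_mul]
    calc |f x| * |condLeak ε x| ≤ |f x| * 1 := by
          apply mul_le_mul_of_nonneg_left _ (abs_nonneg _)
          rw [abs_le]
          exact ⟨by linarith [(condLeak_bounds ε hε0 hε x).1, div_nonneg hε0.le hπ.le],
            (condLeak_bounds ε hε0 hε x).2⟩
      _ = |f x| := mul_one _
  have key : (∫ e in (0:ℝ)..π, f e * (ε / π)) ≤ ∫ e in (0:ℝ)..π, f e * condLeak ε e := by
    apply intervalIntegral.integral_mono_on hπ.le _ hint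
    · intro x hx
      exact mul_le_mul_of_nonneg_left (condLeak_bounds ε hε0 hε x).1 (hf_nonneg x hx)
    · exact hf_int.mul_const _
  calc ε / π = 1 * (ε / π) := (one_mul _).symm
    _ = (∫ e in (0:ℝ)..π, f e) * (ε / π) := by rw [hf_one]
    _ = ∫ e in (0:ℝ)..π, f e * (ε / π) := (intervalIntegral.integral_mul_const _ _).symm
    _ ≤ _ := key
end

section
/- Let 0 < ε < π/2, let e ∈ (ε, π − ε), and let 0 < q ≤ ε/(π sin e) with qπ sin e < π/2. Then n* = arccos(cos ε / cos(q π sin e)) satisfies min(arccos(cos ε / cos(min{n*, ε})) / (π sin e), 1) = q, i.e., this noise magnitude achieves conditional leakage probability exactly q. -/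
open Real

lemma arccos_le_arccos' {x y : ℝ} (h : x ≤ y) : Real.arccos y ≤ Real.arccos x := by
  unfold Real.arccos
  have := Real.monotone_arcsin h
  linarith

/-- For `0 < ε < π/2`, `e ∈ (ε, π − ε)`, `0 < q ≤ ε/(π sin e)` with `qπ sin e < π/2`,
the noise magnitude `n* = arccos(cos ε / cos(qπ sin e))` achieves conditional leakage
probability exactly `q`. -/
theorem noise_achieves_q (ε e q : ℝ) (hε0 : 0 < ε) (hε : ε < π / 2)
    (he : e ∈ Set.Ioo ε (π - ε)) (hq0 : 0 < q) (hq : q ≤ ε / (π * Real.sin e))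
    (hq2 : q * π * Real.sin e < π / 2) :
    min (Real.arccos (Real.cos ε /
        Real.cos (min (Real.arccos (Real.cos ε / Real.cos (q * π * Real.sin e))) ε)) /
        (π * Real.sin e)) 1 = q := by
  obtain ⟨he1, he2⟩ := he
  have hπ := Real.pi_pos
  have hsin : 0 < Real.sin e := Real.sin_pos_of_pos_of_lt_pi (by linarith) (by linarith)
  have hs : 0 < π * Real.sin e := by positivity
  set a := q * π * Real.sin e with ha_def
  have ha0 : 0 < a := by positivity
  have haε : a ≤ ε := by
    have h := (le_div_iff₀ hs).mp hq
    calc a = q * (π * Real.sin e) := by ring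
    _ ≤ ε := h
  have hcosa : 0 < Real.cos a := Real.cos_pos_of_mem_Ioo ⟨by linarith, hq2⟩
  have hcosε : 0 < Real.cos ε := Real.cos_pos_of_mem_Ioo ⟨by linarith, hε⟩
  have hle : Real.cos ε ≤ Real.cos a :=
    Real.cos_le_cos_of_nonneg_of_le_pi ha0.le (by linarith) haε
  set r := Real.cos ε / Real.cos a with hr_def
  have hr0 : 0 < r := div_pos hcosε hcosa
  have hr1 : r ≤ 1 := (div_le_one hcosa).mpr hle
  -- arccos r ≤ ε
  have harc : Real.arccos r ≤ ε := by
    have : Real.cos ε ≤ r := by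
      rw [hr_def, le_div_iff₀ hcosa]
      nlinarith [Real.cos_le_one a]
    calc Real.arccos r ≤ Real.arccos (Real.cos ε) := arccos_le_arccos' this
    _ = ε := Real.arccos_cos hε0.le (by linarith)
  rw [min_eq_left harc, Real.cos_arccos (by linarith) hr1]
  have : Real.cos ε / r = Real.cos a := by
    field_simp [hr_def]
    rw [hr_def, div_mul_cancel₀ _ hcosa.ne']
  rw [this, Real.arccos_cos ha0.le (by linarith)]
  have hq1 : q < 1 := by
    have hsinε : 2 / π * ε ≤ Real.sin ε := Real.mul_le_sin hε0.le hε.le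
    have hsinee : Real.sin ε ≤ Real.sin e := by
      rcases le_or_gt e (π / 2) with h | h
      · exact (Real.sin_lt_sin_of_lt_of_le_pi_div_two (by linarith) h he1).le
      · rw [← Real.sin_pi_sub e]
        exact (Real.sin_lt_sin_of_lt_of_le_pi_div_two (by linarith) (by linarith)
          (by linarith)).le
    have : ε < π * Real.sin e := by
      have h2 : 2 * ε ≤ π * Real.sin ε := by
        rw [div_mul_eq_mul_div, div_le_iff₀ hπ] at hsinε
        nlinarith
      nlinarith
    calc q ≤ ε / (π * Real.sin e) := hq
    _ < 1 := (div_lt_one hs).mpr this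
  rw [ha_def]
  rw [show q * π * Real.sin e / (π * Real.sin e) = q from by field_simp]
  exact min_eq_left hq1.le
end
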